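/- For every nonnegative integer ν, κ(3/2, 3/2, ν) := (1/((2ν+1)! · (1/2))) · ∑_{μ=0}^{ν} [Γ(1/2)Γ(2ν-μ+3/2)/Γ(1/2-μ)] · binomial(ν+1/2, ν-μ) · binomial(ν+1/2, μ) equals √π · 2^{-2ν-1} · C(2ν+2, ν+1). -/

import Mathlib

open Finset

/-- WZ summand. -/
noncomputable def Tq (N m : ℕ) : ℝ :=
  if 2*m ≤ N then
    (-1)^m * (Nat.factorial (2*N-2*m) : ℝ) /
      ((Nat.factorial m : ℝ) * (2*(m:ℝ)+1) * (Nat.factorial (N-m) : ℝ) *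
        (Nat.factorial (N-2*m) : ℝ))
  else 0

/-- WZ certificate. -/
noncomputable def Gq (N m : ℕ) : ℝ :=
  if 2*m ≤ N+2 then
    (-2)/((N:ℝ)+1) * (-1)^m * (m:ℝ) * ((N:ℝ)+2-2*(m:ℝ)) * (Nat.factorial (2*N+2-2*m) : ℝ) /
      ((Nat.factorial m : ℝ) * (Nat.factorial (N+1-m) : ℝ) * (Nat.factorial (N+2-2*m) : ℝ))
  else 0

private lemma factQ (n : ℕ) : ((Nat.factorial (n+1) : ℝ)) = ((n:ℝ)+1) * (Nat.factorial n : ℝ) := by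
  rw [Nat.factorial_succ]; push_cast; ring

private lemma factQ_ne (n : ℕ) : ((Nat.factorial n : ℝ)) ≠ 0 := by
  exact_mod_cast Nat.factorial_ne_zero n

lemma wz (N m : ℕ) : ((N:ℝ)+2) * Tq (N+1) m - 4*((N:ℝ)+1) * Tq N m
    = Gq N (m+1) - Gq N m := by
  rcases le_or_gt (2*m+1) N with h | h
  · -- generic case, N = 2m+1+b
    obtain ⟨b, rfl⟩ : ∃ b, N = 2*m+1+b := ⟨N-(2*m+1), by omega⟩
    rw [Tq, if_pos (by omega : 2*m ≤ 2*m+1+b+1), Tq, if_pos (by omega : 2*m ≤ 2*m+1+b),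
      Gq, if_pos (by omega : 2*(m+1) ≤ 2*m+1+b+2), Gq, if_pos (by omega : 2*m ≤ 2*m+1+b+2)]
    simp only [show 2*(2*m+1+b+1)-2*m = 2*m+2*b+4 from by omega,
      show (2*m+1+b+1)-m = m+b+2 from by omega,
      show (2*m+1+b+1)-2*m = b+2 from by omega,
      show 2*(2*m+1+b)-2*m = 2*m+2*b+2 from by omega,
      show (2*m+1+b)-m = m+b+1 from by omega,
      show (2*m+1+b)-2*m = b+1 from by omega,
      show 2*(2*m+1+b)+2-2*(m+1) = 2*m+2*b+2 from by omega,
      show (2*m+1+b)+1-(m+1) = m+b+1 from by omega,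
      show (2*m+1+b)+2-2*(m+1) = b+1 from by omega,
      show 2*(2*m+1+b)+2-2*m = 2*m+2*b+4 from by omega,
      show (2*m+1+b)+1-m = m+b+2 from by omega,
      show (2*m+1+b)+2-2*m = b+3 from by omega]
    have f1 : ((Nat.factorial (2*m+2*b+4) : ℝ))
        = (2*(m:ℝ)+2*b+4)*(2*(m:ℝ)+2*b+3)*(Nat.factorial (2*m+2*b+2) : ℝ) := by
      simp only [show 2*m+2*b+4 = (2*m+2*b+2)+1+1 from by omega, factQ, factQ]; push_cast; ring
    have f2 : ((Nat.factorial (m+b+2) : ℝ)) = ((m:ℝ)+b+2)*(Nat.factorial (m+b+1) : ℝ) := by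
      simp only [show m+b+2 = (m+b+1)+1 from by omega, factQ]; push_cast; ring
    have f3 : ((Nat.factorial (b+2) : ℝ)) = ((b:ℝ)+2)*(Nat.factorial (b+1) : ℝ) := by
      simp only [show b+2 = (b+1)+1 from by omega, factQ]; push_cast; ring
    have f4 : ((Nat.factorial (b+3) : ℝ)) = ((b:ℝ)+3)*((b:ℝ)+2)*(Nat.factorial (b+1) : ℝ) := by
      simp only [show b+3 = (b+1)+1+1 from by omega, factQ, factQ]; push_cast; ring
    have f5 : ((Nat.factorial (m+1) : ℝ)) = ((m:ℝ)+1)*(Nat.factorial m : ℝ) := factQ m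
    rw [f1, f2, f3, f4, f5]
    have n1 := factQ_ne (2*m+2*b+2)
    have n2 := factQ_ne (m+b+1)
    have n3 := factQ_ne (b+1)
    have n4 := factQ_ne m
    have n5 : (2*(m:ℝ)+1) ≠ 0 := by positivity
    have n6 : ((2*m+1+b:ℕ):ℝ)+1 ≠ 0 := by positivity
    push_cast
    field_simp
    ring
  · by_cases h1 : 2*m = N
    · -- 2m = N
      obtain rfl : N = 2*m := h1.symm
      rw [Tq, if_pos (by omega : 2*m ≤ 2*m+1), Tq, if_pos (by omega : 2*m ≤ 2*m),
        Gq, if_pos (by omega : 2*(m+1) ≤ 2*m+2), Gq, if_pos (by omega : 2*m ≤ 2*m+2)]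
      simp only [show 2*(2*m+1)-2*m = 2*m+2 from by omega,
        show (2*m+1)-m = m+1 from by omega,
        show (2*m+1)-2*m = 1 from by omega,
        show 2*(2*m)-2*m = 2*m from by omega,
        show (2*m)-m = m from by omega,
        show (2*m)-2*m = 0 from by omega,
        show 2*(2*m)+2-2*(m+1) = 2*m from by omega,
        show (2*m)+1-(m+1) = m from by omega,
        show (2*m)+2-2*(m+1) = 0 from by omega,
        show 2*(2*m)+2-2*m = 2*m+2 from by omega,
        show (2*m)+1-m = m+1 from by omega,
        show (2*m)+2-2*m = 2 from by omega]
      have f1 : ((Nat.factorial (2*m+2) : ℝ))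
          = (2*(m:ℝ)+2)*(2*(m:ℝ)+1)*(Nat.factorial (2*m) : ℝ) := by
        simp only [show 2*m+2 = (2*m)+1+1 from by omega, factQ, factQ]; push_cast; ring
      have f5 : ((Nat.factorial (m+1) : ℝ)) = ((m:ℝ)+1)*(Nat.factorial m : ℝ) := factQ m
      rw [f1, f5]
      have n1 := factQ_ne (2*m)
      have n4 := factQ_ne m
      have n5 : (2*(m:ℝ)+1) ≠ 0 := by positivity
      have n6 : ((2*m:ℕ):ℝ)+1 ≠ 0 := by positivity
      simp only [Nat.factorial_zero, Nat.factorial_one, Nat.factorial_two]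
      push_cast
      field_simp
      ring
    · by_cases h2 : 2*m = N+1
      · -- 2m = N+1, m = m'+1, N = 2m'+1
        obtain ⟨m', rfl⟩ : ∃ m', m = m'+1 := ⟨m-1, by omega⟩
        obtain rfl : N = 2*m'+1 := by omega
        rw [Tq, if_pos (by omega : 2*(m'+1) ≤ 2*m'+1+1), Tq,
          if_neg (by omega : ¬ 2*(m'+1) ≤ 2*m'+1),
          Gq, if_neg (by omega : ¬ 2*(m'+1+1) ≤ 2*m'+1+2),
          Gq, if_pos (by omega : 2*(m'+1) ≤ 2*m'+1+2)]
        simp only [show 2*(2*m'+1+1)-2*(m'+1) = 2*m'+2 from by omega,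
          show (2*m'+1+1)-(m'+1) = m'+1 from by omega,
          show (2*m'+1+1)-2*(m'+1) = 0 from by omega,
          show 2*(2*m'+1)+2-2*(m'+1) = 2*m'+2 from by omega,
          show (2*m'+1)+1-(m'+1) = m'+1 from by omega,
          show (2*m'+1)+2-2*(m'+1) = 1 from by omega]
        have f1 : ((Nat.factorial (2*m'+2) : ℝ))
            = (2*(m':ℝ)+2)*(2*(m':ℝ)+1)*(Nat.factorial (2*m') : ℝ) := by
          simp only [show 2*m'+2 = (2*m')+1+1 from by omega, factQ, factQ]; push_cast; ring
        have f5 : ((Nat.factorial (m'+1) : ℝ)) = ((m':ℝ)+1)*(Nat.factorial m' : ℝ) := factQ m'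
        rw [f1, f5]
        have n1 := factQ_ne (2*m')
        have n4 := factQ_ne m'
        have n5 : (2*((m':ℝ)+1)+1) ≠ 0 := by positivity
        have n6 : ((2*m'+1:ℕ):ℝ)+1 ≠ 0 := by positivity
        simp only [Nat.factorial_zero, Nat.factorial_one]
        push_cast
        field_simp
        ring
      · by_cases h3 : 2*m = N+2
        · -- 2m = N+2 : only Gq N m has true condition but carries factor 0
          rw [Tq, if_neg (by omega), Tq, if_neg (by omega),
            Gq, if_neg (by omega), Gq, if_pos (by omega)]
          have : ((N:ℝ)+2-2*(m:ℝ)) = 0 := by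
            have : (2*m : ℝ) = (N:ℝ)+2 := by exact_mod_cast congrArg (Nat.cast (R := ℝ)) h3
            push_cast at this ⊢; linarith
          rw [this]; ring
        · -- 2m ≥ N+3
          rw [Tq, if_neg (by omega), Tq, if_neg (by omega),
            Gq, if_neg (by omega), Gq, if_neg (by omega)]
          ring

noncomputable def Sq (N : ℕ) : ℝ := ∑ m ∈ Finset.range (N+2), Tq N m

lemma Sq_eq : ∀ N, Sq N = 4^N / ((N:ℝ)+1) := by
  intro N
  induction N with
  | zero =>
    simp [Sq, Tq, Finset.sum_range_succ]
  | succ N ih =>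
    have key : ((N:ℝ)+2) * Sq (N+1) - 4*((N:ℝ)+1) * Sq N = 0 := by
      have h1 : Sq (N+1) = ∑ m ∈ Finset.range (N+2), Tq (N+1) m := by
        rw [Sq, Finset.sum_range_succ, Tq, if_neg (by omega)]
        ring
      rw [h1, Sq, Finset.mul_sum, Finset.mul_sum, ← Finset.sum_sub_distrib]
      have h2 : ∀ m ∈ Finset.range (N+2),
          ((N:ℝ)+2) * Tq (N+1) m - 4*((N:ℝ)+1) * Tq N m = Gq N (m+1) - Gq N m := by
        intro m _; exact wz N m
      rw [Finset.sum_congr rfl h2, Finset.sum_range_sub (Gq N)]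
      rw [Gq, if_neg (by omega), Gq, if_pos (by omega)]
      norm_num
    rw [ih] at key
    have hN2 : ((N:ℝ)+2) ≠ 0 := by positivity
    have hN1 : ((N:ℝ)+1) ≠ 0 := by positivity
    have : Sq (N+1) = 4*((N:ℝ)+1) * (4^N / ((N:ℝ)+1)) / ((N:ℝ)+2) := by
      field_simp at key ⊢; linarith
    rw [this]
    push_cast
    field_simp
    ring

lemma prodOdd (ν : ℕ) : ∀ j, j ≤ ν → ∏ i ∈ Finset.range j, ((ν:ℝ) + 1/2 - i)
    = (Nat.factorial (2*ν+1) : ℝ) * (Nat.factorial (ν-j) : ℝ) * 2^(ν-j) /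
      (2^(ν+j) * (Nat.factorial ν : ℝ) * (Nat.factorial (2*(ν-j)+1) : ℝ)) := by
  intro j
  induction j with
  | zero =>
    intro _
    simp
    field_simp
  | succ j ih =>
    intro hj
    rw [Finset.prod_range_succ, ih (by omega)]
    obtain ⟨c, rfl⟩ : ∃ c, ν = j+1+c := ⟨ν-(j+1), by omega⟩
    simp only [show (j+1+c)-j = c+1 from by omega,
      show (j+1+c)-(j+1) = c from by omega,
      show (j+1+c)+(j+1) = ((j+1+c)+j)+1 from by omega,
      show 2*(c+1)+1 = (2*c+1)+1+1 from by omega]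
    simp only [factQ]
    rw [pow_succ, pow_succ]
    have n1 := factQ_ne (j+1+c)
    have n2 := factQ_ne c
    have n3 := factQ_ne (2*c+1)
    have n4 := factQ_ne (2*(j+1+c)+1)
    have n5 : ((2:ℝ))^((j+1+c)+j) ≠ 0 := by positivity
    have n6 : ((2:ℝ))^c ≠ 0 := by positivity
    push_cast
    field_simp
    ring

lemma prodHalf : ∀ μ : ℕ, ∏ i ∈ Finset.range μ, ((1:ℝ)/2 - ((i:ℝ)+1))
    = (-1)^μ * (Nat.factorial (2*μ) : ℝ) / (4^μ * (Nat.factorial μ : ℝ)) := by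
  intro μ
  induction μ with
  | zero => norm_num
  | succ μ ih =>
    rw [Finset.prod_range_succ, ih]
    simp only [show 2*(μ+1) = (2*μ)+1+1 from by omega]
    simp only [factQ]
    rw [pow_succ, pow_succ]
    have n1 := factQ_ne (2*μ)
    have n2 := factQ_ne μ
    have n3 : ((4:ℝ))^μ ≠ 0 := by positivity
    push_cast
    field_simp
    ring

lemma gammaNatHalf : ∀ k : ℕ, Real.Gamma ((k:ℝ) + 1/2)
    = Real.sqrt Real.pi * (Nat.factorial (2*k) : ℝ) / (4^k * (Nat.factorial k : ℝ)) := by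
  intro k
  induction k with
  | zero =>
    rw [show ((0:ℕ):ℝ) + 1/2 = 1/2 from by norm_num, Real.Gamma_one_half_eq]
    norm_num [Nat.factorial]
  | succ k ih =>
    have h1 : ((k:ℝ)+1) + 1/2 = ((k:ℝ) + 1/2) + 1 := by ring
    have h2 : ((k:ℝ) + 1/2) ≠ 0 := by positivity
    rw [show (((k+1:ℕ)):ℝ) = (k:ℝ)+1 from by push_cast; ring, h1,
      Real.Gamma_add_one h2, ih]
    simp only [show 2*(k+1) = (2*k)+1+1 from by omega]
    simp only [factQ]
    rw [pow_succ]
    have n1 := factQ_ne (2*k)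
    have n2 := factQ_ne k
    have n3 : ((4:ℝ))^k ≠ 0 := by positivity
    push_cast
    field_simp
    ring

lemma gammaHalfSub : ∀ μ : ℕ, Real.Gamma (1/2 - (μ:ℝ)) * ∏ i ∈ Finset.range μ, ((1:ℝ)/2 - ((i:ℝ)+1))
    = Real.sqrt Real.pi := by
  intro μ
  induction μ with
  | zero =>
    rw [show (1/2 - ((0:ℕ):ℝ)) = 1/2 from by norm_num, Real.Gamma_one_half_eq]
    simp
  | succ μ ih =>
    rw [Finset.prod_range_succ, ← ih]
    have h2 : (1/2 - ((μ:ℝ)+1)) ≠ 0 := by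
      have : (0:ℝ) ≤ μ := Nat.cast_nonneg μ
      intro h; nlinarith
    have h3 : Real.Gamma (1/2 - (μ:ℝ)) = (1/2 - ((μ:ℝ)+1)) * Real.Gamma (1/2 - ((μ:ℝ)+1)) := by
      rw [show (1/2 - (μ:ℝ)) = (1/2 - ((μ:ℝ)+1)) + 1 from by ring, Real.Gamma_add_one h2]
    rw [show ((((μ+1):ℕ)):ℝ) = (μ:ℝ)+1 from by push_cast; ring, h3]
    ring

lemma gammaHalfSub_ne (μ : ℕ) : Real.Gamma (1/2 - (μ:ℝ)) ≠ 0 := by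
  apply Real.Gamma_ne_zero
  intro n h
  have : (1:ℝ) = 2*(μ:ℝ) - 2*(n:ℝ) := by linarith
  have h2 : (2*μ:ℝ) = ((2*n+1:ℕ):ℝ) := by push_cast; linarith
  have h3 : (2*μ:ℕ) = 2*n+1 := by exact_mod_cast h2
  omega

/-- The generalized binomial coefficient `α(α-1)⋯(α-j+1)/j!` for real `α`. -/
noncomputable def genBinom (α : ℝ) (j : ℕ) : ℝ :=
  (∏ i ∈ Finset.range j, (α - i)) / (Nat.factorial j : ℝ)

/-- `κ(3/2, 3/2, ν) = √π · 2^{-2ν-1} · C(2ν+2, ν+1)`. -/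
theorem stmt_17 (ν : ℕ) :
    (1 / ((Nat.factorial (2 * ν + 1) : ℝ) * (1 / 2))) *
      ∑ μ ∈ Finset.range (ν + 1),
        (Real.Gamma (1 / 2) * Real.Gamma (2 * (ν : ℝ) - μ + 3 / 2) /
            Real.Gamma (1 / 2 - μ)) *
          genBinom ((ν : ℝ) + 1 / 2) (ν - μ) * genBinom ((ν : ℝ) + 1 / 2) μ =
      Real.sqrt Real.pi * (2 : ℝ) ^ (-(2 * (ν : ℤ)) - 1) *
        (Nat.choose (2 * ν + 2) (ν + 1) : ℝ) := by
  have hπ : Real.sqrt Real.pi ≠ 0 := (Real.sqrt_pos.mpr Real.pi_pos).ne'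
  set c : ℝ := ((Nat.factorial (2*ν+1) : ℝ))^2 / (2^(6*ν+2) * ((Nat.factorial ν : ℝ))^2)
    with hc
  have key : ∀ μ ∈ Finset.range (ν+1),
      (Real.Gamma (1 / 2) * Real.Gamma (2 * (ν : ℝ) - μ + 3 / 2) /
            Real.Gamma (1 / 2 - μ)) *
          genBinom ((ν : ℝ) + 1 / 2) (ν - μ) * genBinom ((ν : ℝ) + 1 / 2) μ
        = Real.sqrt Real.pi * (c * Tq (2*ν+1) μ) := by
    intro μ hμ
    have hμν : μ ≤ ν := by simpa using Nat.lt_succ_iff.mp (Finset.mem_range.mp hμ)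
    -- Gamma(1/2 - μ)
    have hGsub : Real.Gamma (1/2 - (μ:ℝ))
        = Real.sqrt Real.pi / ((-1)^μ * (Nat.factorial (2*μ) : ℝ) / (4^μ * (Nat.factorial μ : ℝ))) := by
      have h := gammaHalfSub μ
      rw [prodHalf μ] at h
      have hP : ((-1:ℝ))^μ * (Nat.factorial (2*μ) : ℝ) / (4^μ * (Nat.factorial μ : ℝ)) ≠ 0 := by
        have n1 := factQ_ne (2*μ)
        have n2 := factQ_ne μ
        have n3 : ((4:ℝ))^μ ≠ 0 := by positivity
        have n4 : ((-1:ℝ))^μ ≠ 0 := by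
          rcases Nat.even_or_odd μ with he | ho
          · rw [he.neg_one_pow]; norm_num
          · rw [ho.neg_one_pow]; norm_num
        exact div_ne_zero (mul_ne_zero n4 n1) (mul_ne_zero n3 n2)
      field_simp at h ⊢
      linarith [h]
    -- Gamma(2ν - μ + 3/2)
    have hGtop : Real.Gamma (2 * (ν : ℝ) - μ + 3 / 2)
        = Real.sqrt Real.pi * (Nat.factorial (2*(2*ν-μ+1)) : ℝ) /
          (4^(2*ν-μ+1) * (Nat.factorial (2*ν-μ+1) : ℝ)) := by
      have e : 2 * (ν : ℝ) - μ + 3 / 2 = (((2*ν-μ+1 : ℕ)):ℝ) + 1/2 := by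
        have : ((2*ν-μ+1 : ℕ) : ℝ) = 2*(ν:ℝ) - μ + 1 := by
          push_cast [Nat.cast_sub (by omega : μ ≤ 2*ν)]; ring
        rw [this]; ring
      rw [e, gammaNatHalf]
    rw [Real.Gamma_one_half_eq, hGsub, hGtop, genBinom, genBinom,
      prodOdd ν (ν-μ) (by omega), prodOdd ν μ hμν, Tq, if_pos (by omega : 2*μ ≤ 2*ν+1)]
    obtain ⟨d, rfl⟩ : ∃ d, ν = μ + d := ⟨ν-μ, by omega⟩
    simp only [show (μ+d)-μ = d from by omega,
      show (μ+d)-((μ+d)-μ) = μ from by omega,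
      show (μ+d)-d = μ from by omega,
      show 2*(μ+d)-μ+1 = μ+2*d+1 from by omega,
      show 2*(2*(μ+d)+1)-2*μ = 2*(μ+2*d+1) from by omega,
      show (2*(μ+d)+1)-μ = μ+2*d+1 from by omega,
      show (2*(μ+d)+1)-2*μ = 2*d+1 from by omega]
    have n1 := factQ_ne (2*μ)
    have n2 := factQ_ne μ
    have n3 := factQ_ne d
    have n4 := factQ_ne (μ+d)
    have n5 := factQ_ne (2*(μ+d)+1)
    have n6 := factQ_ne (μ+2*d+1)
    have n7 := factQ_ne (2*(μ+2*d+1))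
    have n8 := factQ_ne (2*d+1)
    have p1 : ((2:ℝ))^((μ+d)+d) ≠ 0 := by positivity
    have p2 : ((2:ℝ))^((μ+d)+μ) ≠ 0 := by positivity
    have p3 : ((2:ℝ))^d ≠ 0 := by positivity
    have p4 : ((2:ℝ))^μ ≠ 0 := by positivity
    have p5 : ((2:ℝ))^(6*(μ+d)+2) ≠ 0 := by positivity
    have p6 : ((4:ℝ))^μ ≠ 0 := by positivity
    have p7 : ((4:ℝ))^(μ+2*d+1) ≠ 0 := by positivity
    rw [hc]
    simp only [show (4:ℝ) = 2^2 from by norm_num, ← pow_mul]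
    simp only [factQ]
    field_simp
    push_cast
    ring
  rw [Finset.sum_congr rfl key]
  have hS : ∑ μ ∈ Finset.range (ν+1), Real.sqrt Real.pi * (c * Tq (2*ν+1) μ)
      = Real.sqrt Real.pi * c * Sq (2*ν+1) := by
    rw [Sq, ← Finset.sum_subset (Finset.range_subset_range.mpr (by omega : ν+1 ≤ 2*ν+1+2))
      (fun x _ hx => by
        rw [Tq, if_neg (by simp at hx; omega)])]
    rw [Finset.mul_sum]
    exact Finset.sum_congr rfl (fun x _ => by ring)
  rw [hS, Sq_eq]
  have hC : ((Nat.choose (2*ν+2) (ν+1)):ℝ)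
      = ((Nat.factorial (2*ν+2)) : ℝ) / (((Nat.factorial (ν+1)) : ℝ) * ((Nat.factorial (ν+1)) : ℝ)) := by
    have h := Nat.choose_mul_factorial_mul_factorial (show ν+1 ≤ 2*ν+2 by omega)
    rw [show 2*ν+2-(ν+1) = ν+1 from by omega] at h
    have h2 : ((Nat.choose (2*ν+2) (ν+1) * Nat.factorial (ν+1) * Nat.factorial (ν+1) : ℕ) : ℝ)
        = ((Nat.factorial (2*ν+2) : ℕ) : ℝ) := by exact_mod_cast congrArg (Nat.cast (R := ℝ)) h
    push_cast at h2
    have n1 := factQ_ne (ν+1)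
    field_simp
    linarith [h2]
  rw [hC, hc,
    show (-(2 * (ν:ℤ)) - 1) = -((2*ν+1:ℕ):ℤ) from by push_cast; ring,
    zpow_neg, zpow_natCast]
  have f1 : ((Nat.factorial (2*ν+2) : ℝ)) = (2*(ν:ℝ)+2)*(Nat.factorial (2*ν+1) : ℝ) := by
    rw [show 2*ν+2 = (2*ν+1)+1 from by omega, factQ]; push_cast; ring
  have f2 : ((Nat.factorial (ν+1) : ℝ)) = ((ν:ℝ)+1)*(Nat.factorial ν : ℝ) := factQ ν
  rw [f1, f2]
  have n1 := factQ_ne (2*ν+1)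
  have n2 := factQ_ne ν
  have p1 : ((2:ℝ))^(6*ν+2) ≠ 0 := by positivity
  have p2 : ((2:ℝ))^(2*ν+1) ≠ 0 := by positivity
  have hν1 : ((ν:ℝ))+1 ≠ 0 := by positivity
  have hν2 : ((2*ν+1:ℕ):ℝ)+1 ≠ 0 := by positivity
  simp only [show (4:ℝ) = 2^2 from by norm_num, ← pow_mul]
  push_cast
  field_simp
  ring
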